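/- Achieving heterogeneous differential privacy via the stretching mechanism: let f : D → ℝ have finite global sensitivity S(f) > 0, let v ∈ [0,1]ⁿ be a privacy vector and T(v) a shrinkage matrix with S_i(R(f,v)) ≤ vᵢ·S(f) for all i, where R(f,v)(d) = f(T(v)·d). Then the mechanism f̂(d) = R(f,v)(d) + N, with N Laplace-distributed with scale σ = S(f)/ε, satisfies (ε, v)-differential privacy: for all i, all neighboring d ∼ d⁽ⁱ⁾, and all t ∈ ℝ, the probability density satisfies p_{f̂(d)}(t) ≤ exp(ε·vᵢ)·p_{f̂(d⁽ⁱ⁾)}(t). -/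

import Mathlib

def NeighborAt {n : ℕ} (i : Fin n) (d d' : Fin n → ℝ) : Prop :=
  ∀ j, j ≠ i → d j = d' j

def Neighbor {n : ℕ} (d d' : Fin n → ℝ) : Prop :=
  ∃ i, NeighborAt i d d'

def stretch {n : ℕ} (w : Fin n → ℝ) (x : Fin n → ℝ) : Fin n → ℝ :=
  fun i => w i * x i

def SemiBalanced {n : ℕ} (D : Set (Fin n → ℝ)) : Prop :=
  ∀ w : Fin n → ℝ, (∀ i, w i ∈ Set.Icc (0:ℝ) 1) → ∀ x ∈ D, stretch w x ∈ D

/-- Global sensitivity of `f` over `D`. -/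
noncomputable def globSens {n : ℕ} (f : (Fin n → ℝ) → ℝ) (D : Set (Fin n → ℝ)) : ℝ :=
  sSup {r | ∃ d ∈ D, ∃ d' ∈ D, Neighbor d d' ∧ r = |f d - f d'|}

/-- Modular global sensitivity in coordinate `i` of `g` over `D`. -/
noncomputable def modSens {n : ℕ} (g : (Fin n → ℝ) → ℝ) (D : Set (Fin n → ℝ)) (i : Fin n) : ℝ :=
  sSup {r | ∃ d ∈ D, ∃ d' ∈ D, NeighborAt i d d' ∧ r = |g d - g d'|}

/-- Density of the centered Laplace distribution with scale `σ`. -/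
noncomputable def lapDensity (σ x : ℝ) : ℝ :=
  (1 / (2 * σ)) * Real.exp (-|x| / σ)

/-- Achieving heterogeneous differential privacy via the stretching mechanism. -/
theorem stretching_mechanism_HDP {n : ℕ} (f : (Fin n → ℝ) → ℝ) (D : Set (Fin n → ℝ))
    (hD : SemiBalanced D) (ε : ℝ) (hε : 0 < ε)
    (hSf : 0 < globSens f D)
    (v Tv : Fin n → ℝ) (hv : ∀ i, v i ∈ Set.Icc (0:ℝ) 1)
    (hTv : ∀ i, Tv i ∈ Set.Icc (0:ℝ) 1)
    (hSi : ∀ i, modSens (fun d => f (stretch Tv d)) D i ≤ v i * globSens f D) :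
    ∀ i : Fin n, ∀ d ∈ D, ∀ d' ∈ D, NeighborAt i d d' → ∀ t : ℝ,
      lapDensity (globSens f D / ε) (t - f (stretch Tv d))
        ≤ Real.exp (ε * v i) * lapDensity (globSens f D / ε) (t - f (stretch Tv d')) := by
  intro i d hd d' hd' hnb t
  set S := globSens f D with hS
  have hσ : 0 < S / ε := div_pos hSf hε
  set G := {r | ∃ a ∈ D, ∃ b ∈ D, Neighbor a b ∧ r = |f a - f b|} with hG
  set M := {r | ∃ a ∈ D, ∃ b ∈ D, NeighborAt i a b ∧
      r = |(fun d => f (stretch Tv d)) a - (fun d => f (stretch Tv d)) b|} with hM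
  have hsub : M ⊆ G := by
    rintro r ⟨a, ha, b, hb, hab, rfl⟩
    refine ⟨stretch Tv a, hD Tv hTv a ha, stretch Tv b, hD Tv hTv b hb, ⟨i, ?_⟩, rfl⟩
    intro j hj
    simp [stretch, hab j hj]
  have hbddG : BddAbove G := by
    by_contra h
    have : S = 0 := Real.sSup_of_not_bddAbove h
    linarith
  have hbddM : BddAbove M := hbddG.mono hsub
  have hmem : |f (stretch Tv d) - f (stretch Tv d')| ∈ M := ⟨d, hd, d', hd', hnb, rfl⟩
  have hΔ : |f (stretch Tv d) - f (stretch Tv d')| ≤ v i * S :=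
    le_trans (le_csSup hbddM hmem) (hSi i)
  unfold lapDensity
  rw [mul_left_comm]
  have hpos : 0 < 1 / (2 * (S / ε)) := by positivity
  refine mul_le_mul_of_nonneg_left ?_ (le_of_lt hpos)
  rw [← Real.exp_add, Real.exp_le_exp]
  have habs : |t - f (stretch Tv d')| - |t - f (stretch Tv d)| ≤
      |f (stretch Tv d) - f (stretch Tv d')| := by
    have := abs_sub_abs_le_abs_sub (t - f (stretch Tv d')) (t - f (stretch Tv d))
    have h2 : (t - f (stretch Tv d')) - (t - f (stretch Tv d)) =
        f (stretch Tv d) - f (stretch Tv d') := by ring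
    rwa [h2] at this
  have key : (|t - f (stretch Tv d')| - |t - f (stretch Tv d)|) / (S / ε) ≤ ε * v i := by
    rw [div_le_iff₀ hσ]
    have hεv : ε * v i * (S / ε) = v i * S := by field_simp
    linarith
  rw [sub_div] at key
  rw [neg_div, neg_div]
  linarith
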